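/- For a finite group G, m(G) ≤ MaxDim(G) ≤ i(G), where m(G) is the maximal length of an irredundant generating sequence, MaxDim(G) is the maximal size of a family of maximal subgroups in general position, and i(G) is the maximal length of an irredundant sequence. -/
import Mathlib


/-- A sequence `g : Fin n → G` is irredundant if no `g i` lies in the subgroup
generated by the other elements. -/
def Irredundant {G : Type*} [Group G] {n : ℕ} (g : Fin n → G) : Prop :=
  ∀ i, g i ∉ Subgroup.closure (g '' {j | j ≠ i})

/-- Subgroups `H 1, ..., H n` are in general position if for each `i` the intersection
of the `H j`, `j ≠ i`, strictly contains the intersection of all of them. -/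
def GeneralPosition {G : Type*} [Group G] {n : ℕ} (H : Fin n → Subgroup G) : Prop :=
  ∀ i, (⨅ j, H j) < ⨅ j : {j : Fin n // j ≠ i}, H j

/-- `m G`: maximal length of an irredundant generating sequence. -/
noncomputable def mDim (G : Type*) [Group G] : ℕ :=
  sSup {n | ∃ g : Fin n → G, Irredundant g ∧ Subgroup.closure (Set.range g) = ⊤}

/-- `i G`: maximal length of an irredundant sequence. -/
noncomputable def iDim (G : Type*) [Group G] : ℕ :=
  sSup {n | ∃ g : Fin n → G, Irredundant g}

/-- `MaxDim G`: maximal size of a family of maximal subgroups in general position. -/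
noncomputable def MaxDim (G : Type*) [Group G] : ℕ :=
  sSup {n | ∃ H : Fin n → Subgroup G, (∀ i, IsCoatom (H i)) ∧ GeneralPosition H}

section Aux

variable {G : Type*} [Group G] [Finite G]

lemma irred_card_le {n : ℕ} {g : Fin n → G} (hg : Irredundant g) :
    n ≤ Nat.card G := by
  have hinj : Function.Injective g := by
    intro i j hij
    by_contra h
    exact hg j (Subgroup.subset_closure ⟨i, h, hij⟩)
  simpa using Nat.card_le_card_of_injective g hinj

lemma gp_to_irred {n : ℕ} {H : Fin n → Subgroup G} (hgp : GeneralPosition H) :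
    ∃ g : Fin n → G, Irredundant g := by
  choose x hx1 hx2 using fun i => SetLike.exists_of_lt (hgp i)
  have hmem : ∀ i j, j ≠ i → x i ∈ H j := fun i j hj =>
    Subgroup.mem_iInf.mp (hx1 i) ⟨j, hj⟩
  have hnot : ∀ i, x i ∉ H i := by
    intro i hi
    refine hx2 i (Subgroup.mem_iInf.mpr fun j => ?_)
    by_cases h : j = i
    · exact h ▸ hi
    · exact hmem i j h
  refine ⟨x, fun i hi => hnot i ?_⟩
  refine (Subgroup.closure_le (H i)).mpr ?_ hi
  rintro y ⟨j, hj, rfl⟩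
  exact hmem j i (Ne.symm hj)

lemma irredgen_to_gp {n : ℕ} {g : Fin n → G} (hg : Irredundant g)
    (hgen : Subgroup.closure (Set.range g) = ⊤) :
    ∃ H : Fin n → Subgroup G, (∀ i, IsCoatom (H i)) ∧ GeneralPosition H := by
  have hKtop : ∀ i, Subgroup.closure (g '' {j | j ≠ i}) ≠ ⊤ := by
    intro i h
    exact hg i (h ▸ Subgroup.mem_top (g i))
  choose M hMco hKM using fun i =>
    (eq_top_or_exists_le_coatom (Subgroup.closure (g '' {j | j ≠ i}))).resolve_left (hKtop i)
  have hmem : ∀ i j, j ≠ i → g j ∈ M i := fun i j hj =>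
    hKM i (Subgroup.subset_closure ⟨j, hj, rfl⟩)
  have hnot : ∀ i, g i ∉ M i := by
    intro i hi
    refine (hMco i).1 (top_le_iff.mp ?_)
    rw [← hgen]
    refine (Subgroup.closure_le (M i)).mpr ?_
    rintro y ⟨j, rfl⟩
    by_cases h : j = i
    · exact h ▸ hi
    · exact hmem i j h
  refine ⟨M, hMco, fun i => ?_⟩
  refine lt_of_le_of_ne (le_iInf fun j => iInf_le _ j.1) fun heq => ?_
  have h1 : g i ∈ ⨅ j : {j : Fin n // j ≠ i}, M j.1 :=
    Subgroup.mem_iInf.mpr fun j => hmem j.1 i (Ne.symm j.2)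
  have h2 : g i ∈ ⨅ j, M j := heq ▸ h1
  exact hnot i (Subgroup.mem_iInf.mp h2 i)

end Aux

/-- For a finite group `G`, `m(G) ≤ MaxDim(G) ≤ i(G)`. -/
theorem mDim_le_maxDim_le_iDim (G : Type*) [Group G] [Finite G] :
    mDim G ≤ MaxDim G ∧ MaxDim G ≤ iDim G := by
  have hbdd : BddAbove {n | ∃ g : Fin n → G, Irredundant g} :=
    ⟨Nat.card G, fun n ⟨g, hg⟩ => irred_card_le hg⟩
  have h2 : {n | ∃ H : Fin n → Subgroup G, (∀ i, IsCoatom (H i)) ∧ GeneralPosition H}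
      ⊆ {n | ∃ g : Fin n → G, Irredundant g} := by
    rintro n ⟨H, _, hgp⟩
    exact gp_to_irred hgp
  have h1 : {n | ∃ g : Fin n → G, Irredundant g ∧ Subgroup.closure (Set.range g) = ⊤}
      ⊆ {n | ∃ H : Fin n → Subgroup G, (∀ i, IsCoatom (H i)) ∧ GeneralPosition H} := by
    rintro n ⟨g, hg, hgen⟩
    exact irredgen_to_gp hg hgen
  exact ⟨csSup_le_csSup' (hbdd.mono h2) h1, csSup_le_csSup' hbdd h2⟩
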